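/- Every finite forest F = (V, E) (an acyclic simple graph) satisfies ffn(F) ≤ log₃(2|V| + 1) + 2, where the right-hand side is a real number and the inequality is between the natural number ffn(F), coerced to ℝ, and this real value. -/

import Mathlib

open scoped Classical
set_option linter.unusedSectionVars false
set_option maxHeartbeats 1000000
noncomputable section

variable {V : Type*}

/-- The neighbourhood of a set of vertices: all vertices outside `S` adjacent to some
vertex of `S`. -/
def nbhd [Fintype V] (G : SimpleGraph V) (S : Finset V) : Finset V :=
  Finset.univ.filter fun v => v ∉ S ∧ ∃ u ∈ S, G.Adj u v

/-- The burning sets of a strategy `F` (where `F i` is the firefighter set at time `i`):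
`B 0 = V` and `B (t+1) = (B t \ F (t+1)) ∪ N(B t \ F (t+1))`. -/
def burn [Fintype V] (G : SimpleGraph V) (F : ℕ → Finset V) : ℕ → Finset V
  | 0 => Finset.univ
  | t + 1 => (burn G F t \ F (t + 1)) ∪ nbhd G (burn G F t \ F (t + 1))

/-- `F` is a `T`-winning `m`-strategy for `G`. -/
def WinningStrategy [Fintype V] (G : SimpleGraph V) (m T : ℕ) (F : ℕ → Finset V) : Prop :=
  (∀ i, (F i).card ≤ m) ∧ burn G F T = ∅

/-- The firefighter number of `G`: the least `m` admitting a winning `m`-strategy. -/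
def ffn [Fintype V] (G : SimpleGraph V) : ℕ :=
  sInf {m | ∃ T F, WinningStrategy G m T F}


namespace FFaux


/-- i-th bag of a list of finsets, default empty. -/
def bag (L : List (Finset V)) (i : ℕ) : Finset V := L.getD i ∅

lemma bag_nil (i : ℕ) : bag ([] : List (Finset V)) i = ∅ := rfl

lemma bag_cons_zero (B : Finset V) (L : List (Finset V)) : bag (B :: L) 0 = B := rfl

lemma bag_cons_succ (B : Finset V) (L : List (Finset V)) (i : ℕ) :
    bag (B :: L) (i+1) = bag L i := rfl

lemma bag_of_le (L : List (Finset V)) {i : ℕ} (h : L.length ≤ i) : bag L i = ∅ := by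
  simp [bag, List.getD_eq_getElem?_getD, List.getElem?_eq_none h]

lemma lt_of_mem_bag {L : List (Finset V)} {i : ℕ} {v : V} (h : v ∈ bag L i) : i < L.length := by
  by_contra hc
  rw [bag_of_le L (not_lt.mp hc)] at h
  exact absurd h (Finset.notMem_empty v)

lemma bag_append_left (L1 L2 : List (Finset V)) {i : ℕ} (h : i < L1.length) :
    bag (L1 ++ L2) i = bag L1 i := by
  simp [bag, List.getD_eq_getElem?_getD, List.getElem?_append_left h]

lemma bag_append_right (L1 L2 : List (Finset V)) {i : ℕ} (h : L1.length ≤ i) :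
    bag (L1 ++ L2) i = bag L2 (i - L1.length) := by
  simp [bag, List.getD_eq_getElem?_getD, List.getElem?_append_right h]

lemma bag_reverse (L : List (Finset V)) {i : ℕ} (h : i < L.length) :
    bag L.reverse i = bag L (L.length - 1 - i) := by
  have h2 : L.length - 1 - i < L.length := by omega
  simp only [bag, List.getD_eq_getElem?_getD]
  rw [List.getElem?_eq_getElem (by simpa using h), List.getElem?_eq_getElem h2]
  simp only [Option.getD_some]
  rw [List.getElem_reverse]

lemma bag_map_insert (r : V) (L : List (Finset V)) {i : ℕ} (h : i < L.length) :
    bag (L.map (insert r)) i = insert r (bag L i) := by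
  simp only [bag, List.getD_eq_getElem?_getD]
  rw [List.getElem?_eq_getElem (by simpa using h), List.getElem?_eq_getElem h]
  simp


section Decomp
variable [Fintype V] (G : SimpleGraph V)

/-- A "linear decomposition" (path decomposition) of the induced subgraph on `A`. -/
structure IsDecomp (A : Finset V) (L : List (Finset V)) : Prop where
  subset : ∀ i, bag L i ⊆ A
  cover : ∀ v ∈ A, ∃ i, v ∈ bag L i
  edge : ∀ u v, u ∈ A → v ∈ A → G.Adj u v → ∃ i, u ∈ bag L i ∧ v ∈ bag L i
  interval : ∀ i j l, i ≤ j → j ≤ l → ∀ v, v ∈ bag L i → v ∈ bag L l → v ∈ bag L j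

variable {G}

lemma isDecomp_nil : IsDecomp G ∅ [] := by
  constructor <;> simp [bag_nil]

lemma isDecomp_singleton (r : V) : IsDecomp G {r} [{r}] := by
  constructor
  · intro i
    cases i <;> simp [bag, List.getD]
  · intro v hv; exact ⟨0, show v ∈ ({r} : Finset V) from hv⟩
  · intro u v hu hv hadj
    simp only [Finset.mem_singleton] at hu hv
    exact absurd (hu ▸ hv ▸ hadj) (G.irrefl)
  · intro i j l hij hjl v hvi hvl
    have : i < 1 := lt_of_mem_bag hvi
    have : l < 1 := lt_of_mem_bag hvl
    have : j = 0 := by omega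
    subst this
    have : i = 0 := by omega
    subst this; exact hvi

lemma IsDecomp.reverse {A : Finset V} {L : List (Finset V)} (hd : IsDecomp G A L) :
    IsDecomp G A L.reverse := by
  have key : ∀ i, bag L.reverse i = bag L (L.length - 1 - i) ∨ bag L.reverse i = ∅ := by
    intro i
    by_cases h : i < L.length
    · exact Or.inl (bag_reverse L h)
    · exact Or.inr (by rw [bag_of_le] ; simpa using not_lt.mp h)
  constructor
  · intro i
    rcases key i with h | h <;> rw [h]
    · exact hd.subset _
    · simp
  · intro v hv
    obtain ⟨i, hi⟩ := hd.cover v hv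
    have hilen := lt_of_mem_bag hi
    refine ⟨L.length - 1 - i, ?_⟩
    rw [bag_reverse L (by omega)]
    have : L.length - 1 - (L.length - 1 - i) = i := by omega
    rw [this]; exact hi
  · intro u v hu hv hadj
    obtain ⟨i, hi1, hi2⟩ := hd.edge u v hu hv hadj
    have hilen := lt_of_mem_bag hi1
    refine ⟨L.length - 1 - i, ?_, ?_⟩ <;>
    · rw [bag_reverse L (by omega)]
      have : L.length - 1 - (L.length - 1 - i) = i := by omega
      rw [this]; assumption
  · intro i j l hij hjl v hvi hvl
    have hil := lt_of_mem_bag hvi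
    have hll := lt_of_mem_bag hvl
    have hLi : i < L.length := by simpa using hil
    have hLl : l < L.length := by simpa using hll
    rw [bag_reverse L hLi] at hvi
    rw [bag_reverse L hLl] at hvl
    rw [bag_reverse L (by omega : j < L.length)]
    exact hd.interval _ _ _ (by omega) (by omega) v hvl hvi

/-- Gluing two decompositions with no vertices/edges in common. -/
lemma IsDecomp.glue_disjoint {A1 A2 : Finset V} {L1 L2 : List (Finset V)}
    (h1 : IsDecomp G A1 L1) (h2 : IsDecomp G A2 L2)
    (hdisj : ∀ x ∈ A1, x ∉ A2)
    (hedge : ∀ x ∈ A1, ∀ y ∈ A2, ¬ G.Adj x y) :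
    IsDecomp G (A1 ∪ A2) (L1 ++ L2) := by
  have hbag : ∀ i, bag (L1 ++ L2) i = if i < L1.length then bag L1 i else bag L2 (i - L1.length) := by
    intro i
    by_cases h : i < L1.length
    · rw [bag_append_left _ _ h, if_pos h]
    · rw [bag_append_right _ _ (not_lt.mp h), if_neg h]
  constructor
  · intro i
    rw [hbag]
    split
    · exact (h1.subset _).trans Finset.subset_union_left
    · exact (h2.subset _).trans Finset.subset_union_right
  · intro v hv
    rcases Finset.mem_union.mp hv with hv | hv
    · obtain ⟨i, hi⟩ := h1.cover v hv
      exact ⟨i, by rw [bag_append_left _ _ (lt_of_mem_bag hi)]; exact hi⟩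
    · obtain ⟨i, hi⟩ := h2.cover v hv
      exact ⟨L1.length + i, by rw [bag_append_right _ _ (by omega)]; simpa using hi⟩
  · intro u v hu hv hadj
    rcases Finset.mem_union.mp hu with hu' | hu' <;> rcases Finset.mem_union.mp hv with hv' | hv'
    · obtain ⟨i, hi1, hi2⟩ := h1.edge u v hu' hv' hadj
      exact ⟨i, by rw [bag_append_left _ _ (lt_of_mem_bag hi1)]; exact ⟨hi1, hi2⟩⟩
    · exact absurd hadj (hedge u hu' v hv')
    · exact absurd hadj.symm (hedge v hv' u hu')
    · obtain ⟨i, hi1, hi2⟩ := h2.edge u v hu' hv' hadj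
      exact ⟨L1.length + i, by rw [bag_append_right _ _ (by omega)]; simpa using And.intro hi1 hi2⟩
  · intro i j l hij hjl v hvi hvl
    rw [hbag] at hvi hvl ⊢
    by_cases hi : i < L1.length <;> by_cases hl : l < L1.length
    · rw [if_pos hi] at hvi
      rw [if_pos hl] at hvl
      rw [if_pos (by omega)]
      exact h1.interval _ _ _ hij hjl v hvi hvl
    · -- v in both sides: contradiction, v ∈ A1 ∩ A2
      rw [if_pos hi] at hvi
      rw [if_neg hl] at hvl
      exact absurd (h2.subset _ hvl) (hdisj v (h1.subset _ hvi))
    · omega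
    · rw [if_neg hi] at hvi
      rw [if_neg hl] at hvl
      rw [if_neg (by omega)]
      exact h2.interval _ _ _ (by omega) (by omega) v hvi hvl

end Decomp


section Decomp2
variable [Fintype V] {G : SimpleGraph V}

/-- Insert a new vertex `r` into every bag. -/
lemma IsDecomp.map_insert {A : Finset V} {L : List (Finset V)} (hd : IsDecomp G A L)
    (r : V) (hr : r ∉ A) (hA : A.Nonempty) :
    IsDecomp G (insert r A) (L.map (insert r)) ∧ L.map (insert r) ≠ [] ∧
      (∀ i < (L.map (insert r)).length, r ∈ bag (L.map (insert r)) i) := by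
  have hlen : 0 < L.length := by
    obtain ⟨x, hx⟩ := hA
    obtain ⟨i, hi⟩ := hd.cover x hx
    have := lt_of_mem_bag hi; omega
  have hbag : ∀ i, i < L.length → bag (L.map (insert r)) i = insert r (bag L i) :=
    fun i hi => bag_map_insert r L hi
  refine ⟨?_, by simpa using List.ne_nil_of_length_pos (by simpa using hlen), ?_⟩
  · constructor
    · intro i
      by_cases hi : i < L.length
      · rw [hbag i hi]
        exact Finset.insert_subset_insert _ (hd.subset i)
      · rw [bag_of_le _ (by simpa using not_lt.mp hi)]; simp
    · intro v hv
      rcases Finset.mem_insert.mp hv with rfl | hv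
      · exact ⟨0, by rw [hbag 0 hlen]; exact Finset.mem_insert_self _ _⟩
      · obtain ⟨i, hi⟩ := hd.cover v hv
        exact ⟨i, by rw [hbag i (lt_of_mem_bag hi)]; exact Finset.mem_insert_of_mem hi⟩
    · intro u v hu hv hadj
      rcases Finset.mem_insert.mp hu with rfl | hu' <;> rcases Finset.mem_insert.mp hv with rfl | hv'
      · exact absurd hadj (G.irrefl)
      · obtain ⟨i, hi⟩ := hd.cover v hv'
        refine ⟨i, ?_⟩
        rw [hbag i (lt_of_mem_bag hi)]
        exact ⟨Finset.mem_insert_self _ _, Finset.mem_insert_of_mem hi⟩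
      · obtain ⟨i, hi⟩ := hd.cover u hu'
        refine ⟨i, ?_⟩
        rw [hbag i (lt_of_mem_bag hi)]
        exact ⟨Finset.mem_insert_of_mem hi, Finset.mem_insert_self _ _⟩
      · obtain ⟨i, hi1, hi2⟩ := hd.edge u v hu' hv' hadj
        refine ⟨i, ?_⟩
        rw [hbag i (lt_of_mem_bag hi1)]
        exact ⟨Finset.mem_insert_of_mem hi1, Finset.mem_insert_of_mem hi2⟩
    · intro i j l hij hjl v hvi hvl
      have hi : i < L.length := by simpa using lt_of_mem_bag hvi
      have hl : l < L.length := by simpa using lt_of_mem_bag hvl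
      rw [hbag i hi] at hvi
      rw [hbag l hl] at hvl
      rw [hbag j (by omega)]
      rcases Finset.mem_insert.mp hvi with rfl | hvi'
      · exact Finset.mem_insert_self _ _
      · rcases Finset.mem_insert.mp hvl with h' | hvl'
        · exact absurd (hd.subset _ hvi') (h' ▸ hr)
        · exact Finset.mem_insert_of_mem (hd.interval _ _ _ hij hjl v hvi' hvl')
  · intro i hi
    rw [hbag i (by simpa using hi)]
    exact Finset.mem_insert_self _ _

/-- Gluing two decompositions sharing only a vertex `r` contained in every bag. -/
lemma IsDecomp.glue_allr {A1 A2 : Finset V} {L1 L2 : List (Finset V)} {r : V}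
    (h1 : IsDecomp G A1 L1) (h2 : IsDecomp G A2 L2)
    (hr1 : ∀ i < L1.length, r ∈ bag L1 i) (hr2 : ∀ i < L2.length, r ∈ bag L2 i)
    (hdisj : ∀ x ∈ A1, x ∈ A2 → x = r)
    (hedge : ∀ x ∈ A1, ∀ y ∈ A2, G.Adj x y → x = r ∨ y = r) :
    IsDecomp G (A1 ∪ A2) (L1 ++ L2) ∧
      (∀ i < (L1 ++ L2).length, r ∈ bag (L1 ++ L2) i) := by
  have hbag : ∀ i, bag (L1 ++ L2) i = if i < L1.length then bag L1 i else bag L2 (i - L1.length) := by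
    intro i
    by_cases h : i < L1.length
    · rw [bag_append_left _ _ h, if_pos h]
    · rw [bag_append_right _ _ (not_lt.mp h), if_neg h]
  have hrall : ∀ i < (L1 ++ L2).length, r ∈ bag (L1 ++ L2) i := by
    intro i hi
    rw [hbag]
    simp only [List.length_append] at hi
    split
    · exact hr1 i ‹_›
    · exact hr2 _ (by omega)
  refine ⟨?_, hrall⟩
  constructor
  · intro i
    rw [hbag]
    split
    · exact (h1.subset _).trans Finset.subset_union_left
    · exact (h2.subset _).trans Finset.subset_union_right
  · intro v hv
    rcases Finset.mem_union.mp hv with hv | hv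
    · obtain ⟨i, hi⟩ := h1.cover v hv
      exact ⟨i, by rw [bag_append_left _ _ (lt_of_mem_bag hi)]; exact hi⟩
    · obtain ⟨i, hi⟩ := h2.cover v hv
      exact ⟨L1.length + i, by rw [bag_append_right _ _ (by omega)]; simpa using hi⟩
  · intro u v hu hv hadj
    rcases Finset.mem_union.mp hu with hu' | hu' <;> rcases Finset.mem_union.mp hv with hv' | hv'
    · obtain ⟨i, hi1, hi2⟩ := h1.edge u v hu' hv' hadj
      exact ⟨i, by rw [bag_append_left _ _ (lt_of_mem_bag hi1)]; exact ⟨hi1, hi2⟩⟩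
    · rcases hedge u hu' v hv' hadj with rfl | rfl
      · obtain ⟨i, hi⟩ := h2.cover v hv'
        have hl := lt_of_mem_bag hi
        exact ⟨L1.length + i, by
          rw [bag_append_right _ _ (by omega)]
          simp only [Nat.add_sub_cancel_left]
          exact ⟨hr2 i hl, hi⟩⟩
      · obtain ⟨i, hi⟩ := h1.cover u hu'
        have hl := lt_of_mem_bag hi
        exact ⟨i, by rw [bag_append_left _ _ hl]; exact ⟨hi, hr1 i hl⟩⟩
    · rcases hedge v hv' u hu' hadj.symm with rfl | rfl
      · obtain ⟨i, hi⟩ := h2.cover u hu'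
        have hl := lt_of_mem_bag hi
        exact ⟨L1.length + i, by
          rw [bag_append_right _ _ (by omega)]
          simp only [Nat.add_sub_cancel_left]
          exact ⟨hi, hr2 i hl⟩⟩
      · obtain ⟨i, hi⟩ := h1.cover v hv'
        have hl := lt_of_mem_bag hi
        exact ⟨i, by rw [bag_append_left _ _ hl]; exact ⟨hr1 i hl, hi⟩⟩
    · obtain ⟨i, hi1, hi2⟩ := h2.edge u v hu' hv' hadj
      exact ⟨L1.length + i, by rw [bag_append_right _ _ (by omega)]; simpa using And.intro hi1 hi2⟩
  · intro i j l hij hjl v hvi hvl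
    by_cases hvr : v = r
    · subst hvr
      have hl : l < (L1 ++ L2).length := lt_of_mem_bag hvl
      exact hrall j (by omega)
    rw [hbag] at hvi hvl ⊢
    by_cases hi : i < L1.length <;> by_cases hl : l < L1.length
    · rw [if_pos hi] at hvi
      rw [if_pos hl] at hvl
      rw [if_pos (by omega)]
      exact h1.interval _ _ _ hij hjl v hvi hvl
    · rw [if_pos hi] at hvi
      rw [if_neg hl] at hvl
      exact absurd (hdisj v (h1.subset _ hvi) (h2.subset _ hvl)) hvr
    · omega
    · rw [if_neg hi] at hvi
      rw [if_neg hl] at hvl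
      rw [if_neg (by omega)]
      exact h2.interval _ _ _ (by omega) (by omega) v hvi hvl

/-- Gluing two decompositions along a bridge edge `r — r'`. -/
lemma IsDecomp.glue_bridge {A1 A2 : Finset V} {L1 L2 : List (Finset V)} {r r' : V}
    (h1 : IsDecomp G A1 L1) (h2 : IsDecomp G A2 L2)
    (hne1 : L1 ≠ []) (hne2 : L2 ≠ [])
    (hrlast : r ∈ bag L1 (L1.length - 1)) (hrfirst : r' ∈ bag L2 0)
    (hdisj : ∀ x ∈ A1, x ∉ A2)
    (hedge : ∀ x ∈ A1, ∀ y ∈ A2, G.Adj x y → x = r ∧ y = r') :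
    IsDecomp G (A1 ∪ A2) (L1 ++ [{r, r'}] ++ L2) := by
  have hrA1 : r ∈ A1 := h1.subset _ hrlast
  have hrA2 : r' ∈ A2 := h2.subset _ hrfirst
  have hlen1 : 0 < L1.length := List.length_pos_iff.mpr hne1
  set n1 := L1.length with hn1
  have hbag : ∀ i, bag (L1 ++ [{r, r'}] ++ L2) i =
      if i < n1 then bag L1 i else if i = n1 then {r, r'} else bag L2 (i - n1 - 1) := by
    intro i
    have hlenmid : (L1 ++ [{r, r'}]).length = n1 + 1 := by simp [hn1]
    by_cases h : i < n1
    · rw [bag_append_left _ _ (by omega : i < (L1 ++ [{r, r'}]).length), if_pos h]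
      exact bag_append_left _ _ h
    · rw [if_neg h]
      by_cases h2 : i = n1
      · rw [if_pos h2]
        rw [bag_append_left _ _ (by omega : i < (L1 ++ [{r, r'}]).length)]
        rw [bag_append_right _ _ (by omega : L1.length ≤ i)]
        have : i - L1.length = 0 := by omega
        rw [this]
        rfl
      · rw [if_neg h2]
        rw [bag_append_right _ _ (by omega : (L1 ++ [{r, r'}]).length ≤ i)]
        congr 1
        omega
  have hmemA : ∀ i (v : V), v ∈ bag (L1 ++ [{r, r'}] ++ L2) i → v ∈ A1 ∪ A2 := by
    intro i v hv
    rw [hbag] at hv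
    split at hv
    · exact Finset.mem_union_left _ (h1.subset _ hv)
    · split at hv
      · rcases Finset.mem_insert.mp hv with rfl | hv
        · exact Finset.mem_union_left _ hrA1
        · simp only [Finset.mem_singleton] at hv; subst hv; exact Finset.mem_union_right _ hrA2
      · exact Finset.mem_union_right _ (h2.subset _ hv)
  constructor
  · intro i
    intro v hv; exact hmemA i v hv
  · intro v hv
    rcases Finset.mem_union.mp hv with hv | hv
    · obtain ⟨i, hi⟩ := h1.cover v hv
      refine ⟨i, ?_⟩
      rw [hbag, if_pos (lt_of_mem_bag hi)]; exact hi
    · obtain ⟨i, hi⟩ := h2.cover v hv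
      refine ⟨n1 + 1 + i, ?_⟩
      rw [hbag, if_neg (by omega), if_neg (by omega)]
      have : n1 + 1 + i - n1 - 1 = i := by omega
      rw [this]; exact hi
  · intro u v hu hv hadj
    rcases Finset.mem_union.mp hu with hu' | hu' <;> rcases Finset.mem_union.mp hv with hv' | hv'
    · obtain ⟨i, hi1, hi2⟩ := h1.edge u v hu' hv' hadj
      refine ⟨i, ?_⟩
      rw [hbag, if_pos (lt_of_mem_bag hi1)]; exact ⟨hi1, hi2⟩
    · obtain ⟨rfl, rfl⟩ := hedge u hu' v hv' hadj
      refine ⟨n1, ?_⟩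
      rw [hbag, if_neg (by omega), if_pos rfl]
      simp
    · obtain ⟨rfl, rfl⟩ := hedge v hv' u hu' hadj.symm
      refine ⟨n1, ?_⟩
      rw [hbag, if_neg (by omega), if_pos rfl]
      simp
    · obtain ⟨i, hi1, hi2⟩ := h2.edge u v hu' hv' hadj
      refine ⟨n1 + 1 + i, ?_⟩
      rw [hbag, if_neg (by omega), if_neg (by omega)]
      have : n1 + 1 + i - n1 - 1 = i := by omega
      rw [this]; exact ⟨hi1, hi2⟩
  · intro i j l hij hjl v hvi hvl
    have hA : v ∈ A1 ∪ A2 := hmemA i v hvi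
    rw [hbag] at hvi hvl ⊢
    rcases Finset.mem_union.mp hA with hvA | hvA
    · -- v ∈ A1 : occurrences in [0, n1]
      have hvA2 : v ∉ A2 := hdisj v hvA
      have hli : l ≤ n1 := by
        by_contra hc
        rw [if_neg (by omega), if_neg (by omega)] at hvl
        exact hvA2 (h2.subset _ hvl)
      have hii : i ≤ n1 := le_trans (le_trans hij hjl) hli
      -- value at l
      by_cases hln : l < n1
      · -- all within L1
        rw [if_pos hln] at hvl
        rw [if_pos (by omega)] at hvi
        rw [if_pos (by omega)]
        exact h1.interval _ _ _ hij hjl v hvi hvl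
      · have hl_eq : l = n1 := by omega
        subst hl_eq
        rw [if_neg (by omega), if_pos rfl] at hvl
        have hvr : v = r := by
          rcases Finset.mem_insert.mp hvl with rfl | hvl
          · rfl
          · simp only [Finset.mem_singleton] at hvl; subst hvl; exact absurd hrA2 hvA2
        subst hvr
        by_cases hjn : j < n1
        · rw [if_pos hjn]
          rw [if_pos (by omega)] at hvi
          exact h1.interval _ _ _ hij (by omega) _ hvi hrlast
        · have : j = n1 := by omega
          subst this
          rw [if_neg (by omega), if_pos rfl]
          exact Finset.mem_insert_self _ _
    · -- v ∈ A2 : occurrences in [n1, ∞)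
      have hvA1 : v ∉ A1 := fun h => hdisj v h hvA
      have hii : n1 ≤ i := by
        by_contra hc
        rw [if_pos (by omega)] at hvi
        exact hvA1 (h1.subset _ hvi)
      have hll : n1 ≤ l := le_trans (le_trans hii hij) hjl
      by_cases hin : i = n1
      · subst hin
        rw [if_neg (by omega), if_pos rfl] at hvi
        have hvr : v = r' := by
          rcases Finset.mem_insert.mp hvi with rfl | hvi
          · exact absurd hrA1 hvA1
          · simpa using hvi
        subst hvr
        by_cases hjn : j = n1
        · subst hjn
          rw [if_neg (by omega), if_pos rfl]
          exact Finset.mem_insert_of_mem (Finset.mem_singleton_self _)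
        · rw [if_neg (by omega), if_neg hjn]
          have hln : l ≠ n1 := by
            intro h; subst h; omega
          rw [if_neg (by omega), if_neg hln] at hvl
          exact h2.interval 0 (j - n1 - 1) (l - n1 - 1) (by omega) (by omega) _ hrfirst hvl
      · rw [if_neg (by omega), if_neg hin] at hvi
        have hln : l ≠ n1 := by omega
        rw [if_neg (by omega), if_neg hln] at hvl
        have hjn : n1 < j ∨ j = n1 := by omega
        rcases hjn with hjn | hjn
        · rw [if_neg (by omega), if_neg (by omega)]
          exact h2.interval (i - n1 - 1) (j - n1 - 1) (l - n1 - 1) (by omega) (by omega) v hvi hvl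
        · omega
  
end Decomp2


section Reach
variable {G : SimpleGraph V}

variable (G) in
/-- One step of adjacency inside `A`. -/
def Step (A : Finset V) (x y : V) : Prop := x ∈ A ∧ y ∈ A ∧ G.Adj x y

variable (G) in
/-- Reachability inside `A`. -/
def Reach (A : Finset V) : V → V → Prop := Relation.ReflTransGen (Step G A)

lemma Step.symm' {A : Finset V} {x y : V} (h : Step G A x y) : Step G A y x :=
  ⟨h.2.1, h.1, h.2.2.symm⟩

lemma Reach.symm' {A : Finset V} {x y : V} (h : Reach G A x y) : Reach G A y x :=
  by
  induction h with
  | refl => exact Relation.ReflTransGen.refl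
  | tail _ hs ih => exact Relation.ReflTransGen.head hs.symm' ih

lemma Reach.trans' {A : Finset V} {x y z : V} (h : Reach G A x y) (h2 : Reach G A y z) :
    Reach G A x z := Relation.ReflTransGen.trans h h2

lemma Reach.mono {A B : Finset V} (hAB : A ⊆ B) {x y : V} (h : Reach G A x y) :
    Reach G B x y :=
  by
  induction h with
  | refl => exact Relation.ReflTransGen.refl
  | tail _ hs ih => exact Relation.ReflTransGen.tail ih ⟨hAB hs.1, hAB hs.2.1, hs.2.2⟩

lemma Reach.mem_right {A : Finset V} {x y : V} (h : Reach G A x y) : y = x ∨ y ∈ A := by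
  induction h with
  | refl => exact Or.inl rfl
  | tail _ hstep _ => exact Or.inr hstep.2.1

variable (G) in
/-- The connected component of `u` inside `A`. -/
def comp (A : Finset V) (u : V) : Finset V := A.filter (Reach G A u)

lemma mem_comp {A : Finset V} {u v : V} : v ∈ comp G A u ↔ v ∈ A ∧ Reach G A u v := by
  simp [comp]

lemma comp_subset {A : Finset V} {u : V} : comp G A u ⊆ A := Finset.filter_subset _ _

lemma mem_comp_self {A : Finset V} {u : V} (h : u ∈ A) : u ∈ comp G A u :=
  mem_comp.mpr ⟨h, Relation.ReflTransGen.refl⟩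

lemma comp_eq_of_reach {A : Finset V} {u v : V} (h : Reach G A u v) :
    comp G A u = comp G A v := by
  ext x
  simp only [mem_comp]
  exact ⟨fun ⟨hx, hr⟩ => ⟨hx, h.symm'.trans' hr⟩, fun ⟨hx, hr⟩ => ⟨hx, h.trans' hr⟩⟩

lemma comp_eq_of_mem {A : Finset V} {u v : V} (h : v ∈ comp G A u) :
    comp G A u = comp G A v := comp_eq_of_reach (mem_comp.mp h).2

lemma reach_of_comp_eq {A : Finset V} {u v : V} (hu : u ∈ A) (hv : v ∈ A)
    (h : comp G A u = comp G A v) : Reach G A u v := by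
  have := mem_comp_self (G := G) hv
  rw [← h] at this
  exact (mem_comp.mp this).2

/-- Reachability can be restricted to the component. -/
lemma Reach.restrict {A : Finset V} {u v : V} (hu : u ∈ A) (h : Reach G A u v) :
    Reach G (comp G A u) u v := by
  induction h with
  | refl => exact Relation.ReflTransGen.refl
  | tail hr hstep ih =>
    rename_i b c
    have hb : b ∈ comp G A u := mem_comp.mpr ⟨hstep.1, hr⟩
    have hc : c ∈ comp G A u := mem_comp.mpr ⟨hstep.2.1, hr.tail hstep⟩
    exact ih.tail ⟨hb, hc, hstep.2.2⟩

lemma comp_congr {A B : Finset V} {u : V} (hBA : B ⊆ A) (hu : u ∈ B)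
    (hcomp : comp G A u ⊆ B) : comp G B u = comp G A u := by
  apply Finset.Subset.antisymm
  · intro x hx
    rcases mem_comp.mp hx with ⟨hxB, hr⟩
    exact mem_comp.mpr ⟨hBA hxB, hr.mono hBA⟩
  · intro x hx
    rcases mem_comp.mp hx with ⟨hxA, hr⟩
    have := hr.restrict (hBA hu)
    exact mem_comp.mpr ⟨hcomp hx, this.mono hcomp⟩

/-- Different components are not adjacent. -/
lemma not_adj_of_comp_ne {A : Finset V} {u v x y : V}
    (hx : x ∈ comp G A u) (hy : y ∈ comp G A v)
    (hne : comp G A u ≠ comp G A v) (hadj : G.Adj x y) : False := by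
  rcases mem_comp.mp hx with ⟨hxA, hrx⟩
  rcases mem_comp.mp hy with ⟨hyA, hry⟩
  apply hne
  rw [comp_eq_of_reach hrx, comp_eq_of_reach hry]
  exact comp_eq_of_reach (Relation.ReflTransGen.single ⟨hxA, hyA, hadj⟩)

/-- Conversion from `Reach` to a walk in `G` with support inside `A`. -/
lemma Reach.exists_walk {A : Finset V} {u v : V} (hu : u ∈ A) (h : Reach G A u v) :
    ∃ p : G.Walk u v, ∀ x ∈ p.support, x ∈ A := by
  induction h with
  | refl => exact ⟨SimpleGraph.Walk.nil, by simpa using hu⟩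
  | tail hr hstep ih =>
    obtain ⟨p, hp⟩ := ih
    refine ⟨p.concat hstep.2.2, ?_⟩
    intro x hx
    rw [SimpleGraph.Walk.support_concat] at hx
    simp only [List.concat_eq_append, List.mem_append, List.mem_singleton] at hx
    rcases hx with hx | rfl
    · exact hp x hx
    · exact hstep.2.1

lemma reach_of_walk {A : Finset V} {u v : V} (p : G.Walk u v)
    (hp : ∀ x ∈ p.support, x ∈ A) : Reach G A u v := by
  induction p with
  | nil => exact Relation.ReflTransGen.refl
  | cons hadj p ih =>
    rename_i a b c
    refine Relation.ReflTransGen.head ⟨hp a (by simp), hp b ?_, hadj⟩ (ih ?_)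
    · simp [SimpleGraph.Walk.support_cons]
    · intro x hx
      exact hp x (by simp [SimpleGraph.Walk.support_cons, hx])

/-- Connectivity of a finset. -/
def Conn (G : SimpleGraph V) (A : Finset V) : Prop := ∀ u ∈ A, ∀ v ∈ A, Reach G A u v

lemma conn_comp {A : Finset V} (u : V) : Conn G (comp G A u) := by
  intro x hx y hy
  rcases mem_comp.mp hx with ⟨hxA, hrx⟩
  rcases mem_comp.mp hy with ⟨hyA, hry⟩
  have hxy : Reach G A x y := hrx.symm'.trans' hry
  have := hxy.restrict hxA
  have hcc : comp G A x = comp G A u := (comp_eq_of_reach hrx).symm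
  rwa [hcc] at this

end Reach


section Tree
variable {G : SimpleGraph V}

open SimpleGraph

lemma isPath_concat' {u v w : V} (p : G.Walk u v) (hp : p.IsPath) (h : G.Adj v w)
    (hw : w ∉ p.support) : (p.concat h).IsPath := by
  rw [Walk.isPath_def, Walk.support_concat p h, List.nodup_append]
  refine ⟨hp.support_nodup, List.nodup_singleton w, ?_⟩
  intro a ha b hb hab
  simp only [List.mem_singleton] at hb
  subst hb
  exact hw (hab ▸ ha)

/-- T1: two distinct neighbours of `r` lie in distinct components of `A \ {r}`. -/
lemma neighbors_not_reach (hG : G.IsAcyclic) (A : Finset V) {r x y : V}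
    (hx : G.Adj r x) (hy : G.Adj r y) (hxy : x ≠ y)
    (hreach : Reach G (A.erase r) x y) : False := by
  classical
  have hxA : x ∈ A.erase r := by
    rcases (hreach.symm').mem_right with h | h
    · exact absurd h hxy
    · exact h
  obtain ⟨p, hp⟩ := hreach.exists_walk hxA
  have hrp : r ∉ p.support := fun hr => (Finset.mem_erase.mp (hp r hr)).1 rfl
  have hrq1 : r ∉ (↑p.toPath : G.Walk x y).support :=
    fun hr => hrp (p.support_toPath_subset hr)
  have hq2path : (Walk.cons hx.symm (Walk.cons hy Walk.nil)).IsPath := by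
    rw [Walk.isPath_def]
    simp only [Walk.support_cons, Walk.support_nil, List.nodup_cons, List.mem_cons,
      List.mem_singleton, List.not_mem_nil, not_false_iff, List.nodup_nil, and_true]
    push_neg
    exact ⟨⟨hx.ne', hxy, trivial⟩, hy.ne, trivial⟩
  have := hG.path_unique p.toPath ⟨_, hq2path⟩
  apply hrq1
  rw [this]
  simp [Walk.support_cons]

/-- T3 (disjointness): for an edge `u–v`, the branch of `u` (in `A \ v`) and the
branch of `v` (in `A \ u`) are disjoint. -/
lemma branch_disjoint (hG : G.IsAcyclic) (A : Finset V) {u v : V} (huv : G.Adj u v)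
    {x : V} (hxu : x ∈ comp G (A.erase v) u) (hxv : x ∈ comp G (A.erase u) v) : False := by
  classical
  rcases mem_comp.mp hxu with ⟨hxAv, hru⟩
  rcases mem_comp.mp hxv with ⟨hxAu, hrv⟩
  obtain ⟨p1, hp1⟩ := (hru.symm').exists_walk hxAv   -- walk x → u avoiding v
  obtain ⟨p2, hp2⟩ := (hrv.symm').exists_walk hxAu   -- walk x → v avoiding u
  have hvnp1 : v ∉ p1.support := fun h => (Finset.mem_erase.mp (hp1 v h)).1 rfl
  have hunp2 : u ∉ p2.support := fun h => (Finset.mem_erase.mp (hp2 u h)).1 rfl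
  have hvq1 : v ∉ (↑p1.toPath : G.Walk x u).support :=
    fun h => hvnp1 (p1.support_toPath_subset h)
  have huq2 : u ∉ (↑p2.toPath : G.Walk x v).support :=
    fun h => hunp2 (p2.support_toPath_subset h)
  have hw1 : ((↑p1.toPath : G.Walk x u).concat huv).IsPath :=
    isPath_concat' _ p1.toPath.2 huv hvq1
  have := hG.path_unique ⟨_, hw1⟩ p2.toPath
  apply huq2
  have husup : u ∈ ((↑p1.toPath : G.Walk x u).concat huv).support := by
    rw [Walk.support_concat]
    exact List.mem_append_left _ (Walk.end_mem_support _)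
  have heq : (↑(⟨_, hw1⟩ : G.Path x v) : G.Walk x v) = ↑p2.toPath := by rw [this]
  rw [← heq]
  exact husup

/-- T3 (cover): for an edge `u–v` inside a connected `A`, every vertex lies in the
branch of `u` or the branch of `v`. -/
lemma branch_cover (A : Finset V) (hconn : Conn G A) {u v : V} (huv : G.Adj u v)
    (hu : u ∈ A) (hv : v ∈ A) {x : V} (hx : x ∈ A) :
    x ∈ comp G (A.erase v) u ∨ x ∈ comp G (A.erase u) v := by
  classical
  obtain ⟨p, hp⟩ := (hconn u hu x hx).exists_walk hu
  set q : G.Walk u x := ↑p.toPath with hq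
  have hqpath : q.IsPath := p.toPath.2
  have hqsup : ∀ y ∈ q.support, y ∈ A := fun y hy => hp y (p.support_toPath_subset hy)
  by_cases hvq : v ∈ q.support
  · -- segment from v to x avoids u
    right
    set d := q.dropUntil v hvq with hd
    have hdsub := Walk.support_dropUntil_subset q hvq
    have hund : u ∉ d.support := by
      intro hu_d
      have hnodup := hqpath.support_nodup
      rw [← Walk.take_spec q hvq, Walk.support_append] at hnodup
      have hu_take : u ∈ (q.takeUntil v hvq).support := Walk.start_mem_support _
      have : u = v ∨ u ∈ d.support.tail := by
        rw [Walk.support_eq_cons d] at hu_d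
        exact List.eq_or_mem_of_mem_cons hu_d
      rcases this with h | h
      · exact huv.ne h
      · exact (List.disjoint_of_nodup_append hnodup) hu_take h
    have hreach : Reach G (A.erase u) v x := by
      apply reach_of_walk d
      intro y hy
      refine Finset.mem_erase.mpr ⟨?_, hqsup y (hdsub hy)⟩
      rintro rfl
      exact hund hy
    refine mem_comp.mpr ⟨Finset.mem_erase.mpr ⟨?_, hx⟩, hreach⟩
    rintro rfl
    exact hund (Walk.end_mem_support _)
  · left
    have hreach : Reach G (A.erase v) u x := by
      apply reach_of_walk q
      intro y hy
      refine Finset.mem_erase.mpr ⟨?_, hqsup y hy⟩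
      rintro rfl
      exact hvq hy
    refine mem_comp.mpr ⟨Finset.mem_erase.mpr ⟨?_, hx⟩, hreach⟩
    rintro rfl
    exact hvq (Walk.end_mem_support _)

lemma exists_neighbor_comp_aux {A : Finset V} {r : V} :
    ∀ {u : V}, Reach G A u r → u ≠ r →
      ∃ x, G.Adj r x ∧ x ∈ A.erase r ∧ u ∈ comp G (A.erase r) x := by
  classical
  intro u hreach
  induction hreach using Relation.ReflTransGen.head_induction_on with
  | refl => exact fun h => absurd rfl h
  | head hstep htail ih =>
    rename_i a c
    intro har
    have haA : a ∈ A := hstep.1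
    have haer : a ∈ A.erase r := Finset.mem_erase.mpr ⟨har, haA⟩
    by_cases hcr : c = r
    · subst hcr
      exact ⟨a, hstep.2.2.symm, haer, mem_comp_self haer⟩
    · obtain ⟨x, hx1, hx2, hx3⟩ := ih hcr
      refine ⟨x, hx1, hx2, ?_⟩
      rcases mem_comp.mp hx3 with ⟨hcAr, hrxc⟩
      exact mem_comp.mpr ⟨haer, hrxc.tail ⟨hcAr, haer, hstep.2.2.symm⟩⟩

/-- C3: every vertex of `A \ {r}` lies in the component (of `A \ {r}`) of some
neighbour of `r`. -/
lemma exists_neighbor_comp {A : Finset V} (hconn : Conn G A) {r u : V}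
    (hr : r ∈ A) (hu : u ∈ A.erase r) :
    ∃ x, G.Adj r x ∧ x ∈ A.erase r ∧ u ∈ comp G (A.erase r) x := by
  classical
  have huA : u ∈ A := (Finset.mem_erase.mp hu).2
  have hur : u ≠ r := (Finset.mem_erase.mp hu).1
  exact exists_neighbor_comp_aux (hconn u huA r hr) hur

end Tree



section Centroid
variable {G : SimpleGraph V}

open SimpleGraph

/-- Every nonempty connected finset of an acyclic graph has a centroid. -/
lemma exists_centroid (hG : G.IsAcyclic) {A : Finset V} (hconn : Conn G A)
    (hA : A.Nonempty) :
    ∃ c ∈ A, ∀ u ∈ A.erase c, 2 * (comp G (A.erase c) u).card ≤ A.card := by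
  classical
  set g : V → ℕ := fun c => (A.erase c).sup (fun u => (comp G (A.erase c) u).card) with hg
  obtain ⟨c, hcA, hcmin⟩ := Finset.exists_min_image A g hA
  refine ⟨c, hcA, ?_⟩
  by_contra hbad
  push_neg at hbad
  obtain ⟨u, huA, hucard⟩ := hbad
  set C := comp G (A.erase c) u with hC
  obtain ⟨r', hadj, hr'A, hr'comp⟩ := exists_neighbor_comp hconn hcA huA
  have hCeq : C = comp G (A.erase c) r' := (comp_eq_of_mem hr'comp).symm
  have hr'C : r' ∈ C := hCeq ▸ mem_comp_self hr'A
  have hcr' : c ≠ r' := hadj.ne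
  set Bc := comp G (A.erase r') c with hBc
  have hcAr' : c ∈ A.erase r' := Finset.mem_erase.mpr ⟨hcr', hcA⟩
  -- Bc = A \ C
  have hBcEq : Bc = A \ C := by
    ext x
    simp only [Finset.mem_sdiff]
    constructor
    · intro hx
      refine ⟨(Finset.mem_erase.mp (comp_subset hx)).2, ?_⟩
      intro hxC
      exact branch_disjoint hG A hadj.symm (hCeq ▸ hxC : x ∈ comp G (A.erase c) r') hx
    · rintro ⟨hxA, hxC⟩
      rcases branch_cover A hconn hadj hcA (Finset.mem_erase.mp hr'A).2 hxA with h | h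
      · exact h
      · exact absurd (hCeq ▸ h) hxC
  have hCsub : C ⊆ A := comp_subset.trans (Finset.erase_subset _ _)
  have hBcCard : Bc.card = A.card - C.card := by rw [hBcEq, Finset.card_sdiff_of_subset hCsub]
  have hCpos : 0 < C.card := Finset.card_pos.mpr ⟨u, mem_comp_self huA⟩
  have hgcC : C.card ≤ g c := by
    rw [hg]
    exact Finset.le_sup (f := fun u => (comp G (A.erase c) u).card) huA
  have hgr' : g r' < g c := by
    rw [hg]
    simp only
    rw [Finset.sup_lt_iff (show (⊥ : ℕ) < g c from by simp only [bot_eq_zero]; omega)]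
    intro w hw
    set D := comp G (A.erase r') w with hD
    by_cases hDBc : D = Bc
    · rw [hDBc]
      have : Bc.card < C.card := by omega
      omega
    · -- D ⊆ C \ {r'}
      have hDsub : D ⊆ C.erase r' := by
        intro x hx
        have hxAr' : x ∈ A.erase r' := comp_subset hx
        have hxA : x ∈ A := (Finset.mem_erase.mp hxAr').2
        refine Finset.mem_erase.mpr ⟨(Finset.mem_erase.mp hxAr').1, ?_⟩
        rcases branch_cover A hconn hadj hcA (Finset.mem_erase.mp hr'A).2 hxA with h | h
        · exfalso
          apply hDBc
          rw [hD, hBc, comp_eq_of_mem hx, comp_eq_of_mem h]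
        · exact hCeq ▸ h
      have : D.card ≤ (C.erase r').card := Finset.card_le_card hDsub
      have : (C.erase r').card = C.card - 1 := Finset.card_erase_of_mem hr'C
      omega
  exact absurd (hcmin r' (Finset.mem_erase.mp hr'A).2) (by omega)

end Centroid

section Star
variable [Fintype V] {G : SimpleGraph V}

def unionL (cs : List (Finset V)) : Finset V := cs.foldr (· ∪ ·) ∅

lemma mem_unionL {cs : List (Finset V)} {x : V} : x ∈ unionL cs ↔ ∃ C ∈ cs, x ∈ C := by
  induction cs with
  | nil => simp [unionL]
  | cons C cs ih =>
    simp only [unionL, List.foldr_cons, Finset.mem_union]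
    rw [show cs.foldr (· ∪ ·) ∅ = unionL cs from rfl] at *
    simp [ih]

lemma bag_card_append {L1 L2 : List (Finset V)} {K : ℕ}
    (h1 : ∀ i, (bag L1 i).card ≤ K) (h2 : ∀ i, (bag L2 i).card ≤ K) :
    ∀ i, (bag (L1 ++ L2) i).card ≤ K := by
  intro i
  by_cases h : i < L1.length
  · rw [bag_append_left _ _ h]; exact h1 i
  · rw [bag_append_right _ _ (not_lt.mp h)]; exact h2 _

/-- Chain of decompositions of components around a common hub `r`. -/
lemma star_decomp {r : V} {K : ℕ} :
    ∀ cs : List (Finset V),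
    (∀ C ∈ cs, r ∉ C) →
    (∀ C ∈ cs, C.Nonempty) →
    (∀ C ∈ cs, ∃ LC, IsDecomp G C LC ∧ ∀ i, (bag LC i).card ≤ K) →
    cs.Pairwise (fun C D => (∀ x ∈ C, x ∉ D) ∧ ∀ x ∈ C, ∀ y ∈ D, ¬G.Adj x y) →
    ∃ L, IsDecomp G (insert r (unionL cs)) L ∧ (∀ i, (bag L i).card ≤ K + 1) ∧
      L ≠ [] ∧ (∀ i < L.length, r ∈ bag L i) := by
  intro cs
  induction cs with
  | nil =>
    intro _ _ _ _
    refine ⟨[{r}], ?_, ?_, by simp, ?_⟩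
    · have : insert r (unionL []) = {r} := by simp [unionL]
      rw [this]; exact isDecomp_singleton r
    · intro i
      cases i with
      | zero => simp [bag]
      | succ n => simp [bag, List.getD]
    · intro i hi
      simp only [List.length_singleton] at hi
      have : i = 0 := by omega
      subst this
      simp [bag]
  | cons C cs ih =>
    intro hnr hne hdec hpw
    obtain ⟨L2, hL2, hL2card, hL2ne, hL2r⟩ := ih (fun D hD => hnr D (by simp [hD]))
      (fun D hD => hne D (by simp [hD])) (fun D hD => hdec D (by simp [hD])) (List.Pairwise.sublist (by simp) hpw)
    obtain ⟨LC, hLC, hLCcard⟩ := hdec C (by simp)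
    have hrC : r ∉ C := hnr C (by simp)
    obtain ⟨hL1, hL1ne, hL1r⟩ := hLC.map_insert r hrC (hne C (by simp))
    set L1 := LC.map (insert r) with hL1def
    have hpwC := List.pairwise_cons.mp hpw |>.1
    have hglue := IsDecomp.glue_allr (r := r) hL1 hL2 hL1r hL2r
      (by
        intro x hx hx2
        rcases Finset.mem_insert.mp hx with rfl | hx
        · rfl
        rcases Finset.mem_insert.mp hx2 with rfl | hx2
        · rfl
        exfalso
        rcases mem_unionL.mp hx2 with ⟨D, hD, hxD⟩
        exact (hpwC D hD).1 x hx hxD)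
      (by
        intro x hx y hy hadj
        rcases Finset.mem_insert.mp hx with rfl | hx
        · exact Or.inl rfl
        rcases Finset.mem_insert.mp hy with rfl | hy
        · exact Or.inr rfl
        exfalso
        rcases mem_unionL.mp hy with ⟨D, hD, hyD⟩
        exact (hpwC D hD).2 x hx y hyD hadj)
    have hset : insert r C ∪ insert r (unionL cs) = insert r (unionL (C :: cs)) := by
      ext z
      simp only [Finset.mem_union, Finset.mem_insert, mem_unionL, List.mem_cons]
      constructor
      · rintro ((rfl | h) | (rfl | ⟨D, hD, hz⟩))
        · exact Or.inl rfl
        · exact Or.inr ⟨C, Or.inl rfl, h⟩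
        · exact Or.inl rfl
        · exact Or.inr ⟨D, Or.inr hD, hz⟩
      · rintro (rfl | ⟨D, (rfl | hD), hz⟩)
        · exact Or.inl (Or.inl rfl)
        · exact Or.inl (Or.inr hz)
        · exact Or.inr (Or.inr ⟨D, hD, hz⟩)
    refine ⟨L1 ++ L2, hset ▸ hglue.1, ?_, ?_, hglue.2⟩
    · apply bag_card_append _ hL2card
      intro i
      by_cases h : i < LC.length
      · rw [hL1def, bag_map_insert r LC h]
        exact le_trans (Finset.card_insert_le _ _) (by simpa using Nat.add_le_add_right (hLCcard i) 1)
      · rw [bag_of_le _ (by simpa [hL1def] using not_lt.mp h)]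
        simp
    · intro h
      exact hL1ne (by simpa using List.append_eq_nil_iff.mp h |>.1)

end Star

section Anchored
variable [Fintype V] {G : SimpleGraph V}

lemma comp_disjoint {S : Finset V} {u w x : V} (h : comp G S u ≠ comp G S w)
    (hx : x ∈ comp G S u) (hx2 : x ∈ comp G S w) : False :=
  h ((comp_eq_of_mem hx).trans (comp_eq_of_mem hx2).symm)

lemma comps_pack (S : Finset V) (CS : Finset (Finset V))
    (hCS : ∀ C ∈ CS, ∃ u ∈ S, C = comp G S u) :
    (∀ C ∈ CS.toList, C.Nonempty) ∧ (∀ C ∈ CS.toList, C ⊆ S) ∧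
    CS.toList.Pairwise (fun C D => (∀ x ∈ C, x ∉ D) ∧ ∀ x ∈ C, ∀ y ∈ D, ¬G.Adj x y) := by
  refine ⟨?_, ?_, ?_⟩
  · intro C hC
    obtain ⟨u, huS, rfl⟩ := hCS C (Finset.mem_toList.mp hC)
    exact ⟨u, mem_comp_self huS⟩
  · intro C hC
    obtain ⟨u, huS, rfl⟩ := hCS C (Finset.mem_toList.mp hC)
    exact comp_subset
  · have h1 : CS.toList.Pairwise (· ≠ ·) := CS.nodup_toList
    refine List.Pairwise.imp_of_mem (fun ha hb hne => ?_) h1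
    obtain ⟨u, huS, rfl⟩ := hCS _ (Finset.mem_toList.mp ha)
    obtain ⟨w, hwS, rfl⟩ := hCS _ (Finset.mem_toList.mp hb)
    exact ⟨fun x hx hx2 => comp_disjoint hne hx hx2,
      fun x hx y hy hadj => not_adj_of_comp_ne hx hy hne hadj⟩

/-- Main inductive walk-and-decompose lemma. -/
lemma anchored_decomp (hG : G.IsAcyclic) {k : ℕ}
    (Hk : ∀ B : Finset V, Conn G B → 2 * B.card + 1 ≤ 3 ^ k →
      ∃ L, IsDecomp G B L ∧ ∀ i, (bag L i).card ≤ k + 1) :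
    ∀ n, ∀ A : Finset V, A.card ≤ n → Conn G A → ∀ r ∈ A,
      (∀ u ∈ A.erase r, (comp G (A.erase r) u).card ≤ 3 ^ k + 1) →
      (∀ u ∈ A.erase r, ∀ v ∈ A.erase r,
        3 ^ k ≤ 2 * (comp G (A.erase r) u).card →
        3 ^ k ≤ 2 * (comp G (A.erase r) v).card →
        comp G (A.erase r) u = comp G (A.erase r) v) →
      ∃ L, IsDecomp G A L ∧ (∀ i, (bag L i).card ≤ k + 2) ∧ L ≠ [] ∧ r ∈ bag L 0 := by
  classical
  intro n
  induction n with
  | zero =>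
    intro A hcard _ r hr _ _
    have : 0 < A.card := Finset.card_pos.mpr ⟨r, hr⟩
    omega
  | succ n ihn =>
    intro A hcard hconn r hr hall honebig
    set S := A.erase r with hSdef
    by_cases hbig : ∃ u ∈ S, 3 ^ k ≤ 2 * (comp G S u).card
    · -- there is a big component: walk into it
      obtain ⟨u₀, hu₀S, hu₀big⟩ := hbig
      obtain ⟨r', hadjr', hr'S, hu₀comp⟩ := exists_neighbor_comp hconn hr hu₀S
      set Cstar := comp G S u₀ with hCstardef
      have hCeq : Cstar = comp G S r' := (comp_eq_of_mem hu₀comp).symm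
      have hr'C : r' ∈ Cstar := hCeq ▸ mem_comp_self hr'S
      set CS := (S.image (comp G S)).erase Cstar with hCSdef
      have hCSfacts : ∀ C ∈ CS, ∃ u ∈ S, C = comp G S u := by
        intro C hC
        obtain ⟨u, huS, huC⟩ := Finset.mem_image.mp (Finset.mem_of_mem_erase hC)
        exact ⟨u, huS, huC.symm⟩
      obtain ⟨hnex, hsub, hpw⟩ := comps_pack S CS hCSfacts
      have hdecs : ∀ C ∈ CS.toList, ∃ LC, IsDecomp G C LC ∧ ∀ i, (bag LC i).card ≤ k + 1 := by
        intro C hC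
        have hCmem := Finset.mem_toList.mp hC
        obtain ⟨u, huS, rfl⟩ := hCSfacts C hCmem
        have hsmall : 2 * (comp G S u).card + 1 ≤ 3 ^ k := by
          by_contra hbigC
          push_neg at hbigC
          have heq : comp G S u = comp G S u₀ :=
            honebig u huS u₀ hu₀S (by omega) hu₀big
          exact (Finset.mem_erase.mp hCmem).1 (heq.trans hCstardef.symm)
        exact Hk _ (conn_comp u) hsmall
      obtain ⟨L1, hL1, hL1card, hL1ne, hL1r⟩ := star_decomp CS.toList
        (fun C hC hrC => (Finset.mem_erase.mp ((hsub C hC) hrC)).1 rfl)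
        hnex hdecs hpw
      -- recursive call on Cstar anchored at r'
      have hCstarsubS : Cstar ⊆ S := comp_subset
      have hCstarcard : Cstar.card ≤ n := by
        have h2 : S.card < A.card := Finset.card_erase_lt_of_mem hr
        have h3 := Finset.card_le_card hCstarsubS
        omega
      have hCstarHallval : Cstar.card ≤ 3 ^ k + 1 := hall u₀ hu₀S
      have hr'Cer : (Cstar.erase r').card = Cstar.card - 1 := Finset.card_erase_of_mem hr'C
      have hCstarHall : ∀ w ∈ Cstar.erase r', (comp G (Cstar.erase r') w).card ≤ 3 ^ k + 1 := by
        intro w hw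
        have h2 := Finset.card_le_card (comp_subset (G := G) (A := Cstar.erase r') (u := w))
        omega
      have hodd : Odd ((3:ℕ) ^ k) := Odd.pow ⟨1, by norm_num⟩
      obtain ⟨t, ht⟩ := hodd
      have hCstar1big : ∀ w ∈ Cstar.erase r', ∀ w' ∈ Cstar.erase r',
          3 ^ k ≤ 2 * (comp G (Cstar.erase r') w).card →
          3 ^ k ≤ 2 * (comp G (Cstar.erase r') w').card →
          comp G (Cstar.erase r') w = comp G (Cstar.erase r') w' := by
        intro w hw w' hw' hbw hbw'
        by_contra hcne
        have hdisj2 : Disjoint (comp G (Cstar.erase r') w) (comp G (Cstar.erase r') w') :=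
          Finset.disjoint_left.mpr (fun x hx hx2 => (comp_disjoint hcne hx hx2).elim)
        have hcup := Finset.card_union_of_disjoint hdisj2
        have hsubU : comp G (Cstar.erase r') w ∪ comp G (Cstar.erase r') w' ⊆ Cstar.erase r' :=
          Finset.union_subset comp_subset comp_subset
        have hcard2 := Finset.card_le_card hsubU
        omega
      obtain ⟨L2, hL2, hL2card, hL2ne, hL2r⟩ :=
        ihn Cstar hCstarcard (conn_comp u₀) r' hr'C hCstarHall hCstar1big
      -- glue along the bridge r – r'
      have hrnotS : r ∉ S := fun h => (Finset.mem_erase.mp h).1 rfl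
      have hdisj : ∀ x ∈ insert r (unionL CS.toList), x ∉ Cstar := by
        intro x hx hxC
        rcases Finset.mem_insert.mp hx with rfl | hx
        · exact hrnotS (hCstarsubS hxC)
        · obtain ⟨C, hC, hxC2⟩ := mem_unionL.mp hx
          have hCmem := Finset.mem_toList.mp hC
          obtain ⟨u, huS, rfl⟩ := hCSfacts C hCmem
          exact comp_disjoint (fun h => (Finset.mem_erase.mp hCmem).1 (h.trans hCstardef.symm))
            hxC2 (hCstardef ▸ hxC)
      have hedge : ∀ x ∈ insert r (unionL CS.toList), ∀ y ∈ Cstar, G.Adj x y →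
          x = r ∧ y = r' := by
        intro x hx y hy hadj
        rcases Finset.mem_insert.mp hx with rfl | hx
        · refine ⟨rfl, ?_⟩
          by_contra hyr'
          apply neighbors_not_reach hG A hadj hadjr' hyr'
          have : Reach G Cstar y r' := conn_comp u₀ y hy r' hr'C
          exact this.mono hCstarsubS
        · exfalso
          obtain ⟨C, hC, hxC2⟩ := mem_unionL.mp hx
          have hCmem := Finset.mem_toList.mp hC
          obtain ⟨u, huS, rfl⟩ := hCSfacts C hCmem
          exact not_adj_of_comp_ne hxC2 (hCstardef ▸ hy)
            (fun h => (Finset.mem_erase.mp hCmem).1 (h.trans hCstardef.symm)) hadj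
      have hbridge := IsDecomp.glue_bridge hL1 hL2 hL1ne hL2ne
        (hL1r _ (by
          have := List.length_pos_iff.mpr hL1ne
          omega)) hL2r hdisj hedge
      have hset : insert r (unionL CS.toList) ∪ Cstar = A := by
        ext z
        simp only [Finset.mem_union, Finset.mem_insert, mem_unionL]
        constructor
        · rintro ((rfl | ⟨C, hC, hz⟩) | hz)
          · exact hr
          · exact (Finset.erase_subset _ _) ((hsub C hC) hz)
          · exact (Finset.erase_subset _ _) (hCstarsubS hz)
        · intro hz
          by_cases hzr : z = r
          · exact Or.inl (Or.inl hzr)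
          · have hzS : z ∈ S := Finset.mem_erase.mpr ⟨hzr, hz⟩
            by_cases hzC : comp G S z = Cstar
            · exact Or.inr (hzC ▸ mem_comp_self hzS)
            · refine Or.inl (Or.inr ⟨comp G S z, ?_, mem_comp_self hzS⟩)
              rw [Finset.mem_toList, hCSdef]
              exact Finset.mem_erase.mpr ⟨hzC, Finset.mem_image_of_mem _ hzS⟩
      refine ⟨L1 ++ [{r, r'}] ++ L2, hset ▸ hbridge, ?_, ?_, ?_⟩
      · apply bag_card_append (bag_card_append (fun i => le_trans (hL1card i) (by omega)) ?_) (fun i => hL2card i)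
        intro i
        cases i with
        | zero =>
          have : ({r, r'} : Finset V).card ≤ 2 := Finset.card_insert_le _ _ |>.trans (by simp)
          calc (bag [{r, r'}] 0).card = ({r, r'} : Finset V).card := rfl
            _ ≤ 2 := this
            _ ≤ k + 2 := by omega
        | succ m => simp [bag, List.getD]
      · intro h
        have := congrArg List.length h
        simp at this
      · have h0 : (0:ℕ) < L1.length := List.length_pos_iff.mpr hL1ne
        rw [bag_append_left _ _ (by simpa using Nat.lt_of_lt_of_le h0 (by simp)),
          bag_append_left _ _ h0]
        exact hL1r 0 h0
    · -- no big component: hub decomposition around r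
      push_neg at hbig
      set CS := S.image (comp G S) with hCSdef
      have hCSfacts : ∀ C ∈ CS, ∃ u ∈ S, C = comp G S u := by
        intro C hC
        obtain ⟨u, huS, huC⟩ := Finset.mem_image.mp hC
        exact ⟨u, huS, huC.symm⟩
      obtain ⟨hnex, hsub, hpw⟩ := comps_pack S CS hCSfacts
      have hdecs : ∀ C ∈ CS.toList, ∃ LC, IsDecomp G C LC ∧ ∀ i, (bag LC i).card ≤ k + 1 := by
        intro C hC
        obtain ⟨u, huS, rfl⟩ := hCSfacts C (Finset.mem_toList.mp hC)
        exact Hk _ (conn_comp u) (by have := hbig u huS; omega)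
      obtain ⟨L, hL, hLcard, hLne, hLr⟩ := star_decomp CS.toList
        (fun C hC hrC => (Finset.mem_erase.mp ((hsub C hC) hrC)).1 rfl)
        hnex hdecs hpw
      have hset : insert r (unionL CS.toList) = A := by
        ext z
        simp only [Finset.mem_insert, mem_unionL]
        constructor
        · rintro (rfl | ⟨C, hC, hz⟩)
          · exact hr
          · exact (Finset.erase_subset _ _) ((hsub C hC) hz)
        · intro hz
          by_cases hzr : z = r
          · exact Or.inl hzr
          · have hzS : z ∈ S := Finset.mem_erase.mpr ⟨hzr, hz⟩
            refine Or.inr ⟨comp G S z, ?_, mem_comp_self hzS⟩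
            rw [Finset.mem_toList, hCSdef]
            exact Finset.mem_image_of_mem _ hzS
      exact ⟨L, hset ▸ hL, fun i => le_trans (hLcard i) (by omega), hLne,
        hLr 0 (List.length_pos_iff.mpr hLne)⟩

end Anchored

section ConnDecomp
variable [Fintype V] {G : SimpleGraph V}

/-- Scheffler-style bound: a connected subtree with `2·|A| + 1 ≤ 3^k`
has a linear decomposition with bags of size at most `k + 1`. -/
lemma conn_decomp (hG : G.IsAcyclic) :
    ∀ k, ∀ A : Finset V, Conn G A → 2 * A.card + 1 ≤ 3 ^ k →
      ∃ L, IsDecomp G A L ∧ ∀ i, (bag L i).card ≤ k + 1 := by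
  classical
  intro k
  induction k with
  | zero =>
    intro A _ hcard
    have : A.card = 0 := by simpa using hcard
    rw [Finset.card_eq_zero.mp this]
    exact ⟨[], isDecomp_nil, fun i => by simp [bag_nil]⟩
  | succ k ihk =>
    intro A hconn hcard
    rcases Finset.eq_empty_or_nonempty A with rfl | hAne
    · exact ⟨[], isDecomp_nil, fun i => by simp [bag_nil]⟩
    obtain ⟨c, hcA, hcent⟩ := exists_centroid hG hconn hAne
    set S := A.erase c with hSdef
    have hpow : (3:ℕ) ^ (k+1) = 3 * 3 ^ k := by ring
    have hodd : Odd ((3:ℕ) ^ k) := Odd.pow ⟨1, by norm_num⟩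
    obtain ⟨t, ht⟩ := hodd
    have hall : ∀ u ∈ S, (comp G S u).card ≤ 3 ^ k + 1 := by
      intro u huS
      have := hcent u huS
      omega
    by_cases htwo : ∃ u ∈ S, ∃ v ∈ S,
        3 ^ k ≤ 2 * (comp G S u).card ∧ 3 ^ k ≤ 2 * (comp G S v).card ∧
        comp G S u ≠ comp G S v
    · -- two big components C1 ≠ C2
      obtain ⟨u1, hu1S, u2, hu2S, hbig1, hbig2, hne12⟩ := htwo
      set C1 := comp G S u1 with hC1def
      set C2 := comp G S u2 with hC2def
      -- at most two big components
      have hbigtwo : ∀ w ∈ S, 3 ^ k ≤ 2 * (comp G S w).card →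
          comp G S w = C1 ∨ comp G S w = C2 := by
        intro w hwS hbw
        by_contra hcon
        push_neg at hcon
        obtain ⟨hw1, hw2⟩ := hcon
        have hd12 : Disjoint C1 C2 :=
          Finset.disjoint_left.mpr (fun x hx hx2 => (comp_disjoint hne12 hx hx2).elim)
        have hdw1 : Disjoint (comp G S w) C1 :=
          Finset.disjoint_left.mpr (fun x hx hx2 => (comp_disjoint hw1 hx hx2).elim)
        have hdw2 : Disjoint (comp G S w) C2 :=
          Finset.disjoint_left.mpr (fun x hx hx2 => (comp_disjoint hw2 hx hx2).elim)
        have hsu : comp G S w ∪ (C1 ∪ C2) ⊆ S :=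
          Finset.union_subset comp_subset (Finset.union_subset comp_subset comp_subset)
        have e1 := Finset.card_union_of_disjoint hd12
        have e2 := Finset.card_union_of_disjoint (Finset.disjoint_union_right.mpr ⟨hdw1, hdw2⟩)
        have e3 := Finset.card_le_card hsu
        have e4 : S.card < A.card := Finset.card_erase_lt_of_mem hcA
        omega
      -- anchor into C1
      obtain ⟨r1, hadjr1, hr1S, hu1comp⟩ := exists_neighbor_comp hconn hcA hu1S
      have hC1eq : C1 = comp G S r1 := (comp_eq_of_mem hu1comp).symm
      have hr1C1 : r1 ∈ C1 := hC1eq ▸ mem_comp_self hr1S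
      have hC1card : C1.card ≤ 3 ^ k + 1 := hall u1 hu1S
      have hC1sub : C1 ⊆ S := comp_subset
      have hr1er : (C1.erase r1).card = C1.card - 1 := Finset.card_erase_of_mem hr1C1
      have hC1Hall : ∀ w ∈ C1.erase r1, (comp G (C1.erase r1) w).card ≤ 3 ^ k + 1 := by
        intro w hw
        have h2 := Finset.card_le_card (comp_subset (G := G) (A := C1.erase r1) (u := w))
        omega
      have hC1onebig : ∀ w ∈ C1.erase r1, ∀ w' ∈ C1.erase r1,
          3 ^ k ≤ 2 * (comp G (C1.erase r1) w).card →
          3 ^ k ≤ 2 * (comp G (C1.erase r1) w').card →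
          comp G (C1.erase r1) w = comp G (C1.erase r1) w' := by
        intro w hw w' hw' hbw hbw'
        by_contra hcne
        have hdisj2 : Disjoint (comp G (C1.erase r1) w) (comp G (C1.erase r1) w') :=
          Finset.disjoint_left.mpr (fun x hx hx2 => (comp_disjoint hcne hx hx2).elim)
        have hcup := Finset.card_union_of_disjoint hdisj2
        have hsubU : comp G (C1.erase r1) w ∪ comp G (C1.erase r1) w' ⊆ C1.erase r1 :=
          Finset.union_subset comp_subset comp_subset
        have hcard2 := Finset.card_le_card hsubU
        omega
      obtain ⟨L1, hL1, hL1card, hL1ne, hL1r⟩ :=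
        anchored_decomp hG ihk C1.card C1 le_rfl (conn_comp u1) r1 hr1C1 hC1Hall hC1onebig
      -- the rest of the tree
      set A2 := A \ C1 with hA2def
      have hcA2 : c ∈ A2 := by
        rw [hA2def, Finset.mem_sdiff]
        exact ⟨hcA, fun h => (Finset.mem_erase.mp (hC1sub h)).1 rfl⟩
      have hcompsub : ∀ z ∈ S, z ∉ C1 → comp G S z ⊆ A2 := by
        intro z hzS hzC1 x hx
        rw [hA2def, Finset.mem_sdiff]
        refine ⟨(Finset.erase_subset _ _) (comp_subset hx), ?_⟩
        intro hxC1
        exact comp_disjoint (fun h => hzC1 (by rw [hC1def, ← h]; exact mem_comp_self hzS))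
          hx (hC1def ▸ hxC1)
      have hreachc : ∀ z ∈ A2, Reach G A2 z c := by
        intro z hz
        rw [hA2def, Finset.mem_sdiff] at hz
        obtain ⟨hzA, hzC1⟩ := hz
        by_cases hzc : z = c
        · subst hzc; exact Relation.ReflTransGen.refl
        have hzS : z ∈ S := Finset.mem_erase.mpr ⟨hzc, hzA⟩
        obtain ⟨y, hadjy, hyS, hzcomp⟩ := exists_neighbor_comp hconn hcA hzS
        have hCzy : comp G S y = comp G S z := comp_eq_of_mem hzcomp
        have hzC : z ∉ C1 := hzC1
        have hcsub : comp G S y ⊆ A2 := hCzy ▸ hcompsub z hzS hzC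
        have hry : Reach G (comp G S y) y z := by
          have := (mem_comp.mp hzcomp).2
          exact this.restrict hyS
        have hryA2 : Reach G A2 z y := (hry.mono hcsub).symm'
        exact hryA2.tail ⟨hcsub (hCzy ▸ mem_comp_self hzS |> (fun _ => mem_comp_self hyS)), hcA2, hadjy.symm⟩
      have hconnA2 : Conn G A2 := by
        intro x hx y hy
        exact (hreachc x hx).trans' (hreachc y hy).symm'
      -- components of A2.erase c agree with those of S
      have hA2er : A2.erase c = S \ C1 := by
        rw [hA2def, hSdef]
        ext x
        simp only [Finset.mem_erase, Finset.mem_sdiff]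
        tauto
      have hcompeq : ∀ z ∈ A2.erase c, comp G (A2.erase c) z = comp G S z := by
        intro z hz
        have hz' := hz
        rw [hA2er, Finset.mem_sdiff] at hz'
        apply comp_congr (by rw [hA2er]; exact Finset.sdiff_subset) (hA2er ▸ hz)
        rw [hA2er]
        intro x hx
        rw [Finset.mem_sdiff]
        refine ⟨comp_subset hx, ?_⟩
        intro hxC1
        exact comp_disjoint (fun h => hz'.2 (by rw [hC1def, ← h]; exact mem_comp_self hz'.1))
          hx (hC1def ▸ hxC1)
      have hA2Hall : ∀ w ∈ A2.erase c, (comp G (A2.erase c) w).card ≤ 3 ^ k + 1 := by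
        intro w hw
        rw [hcompeq w hw]
        exact hall w (by rw [hA2er, Finset.mem_sdiff] at hw; exact hw.1)
      have hA2onebig : ∀ w ∈ A2.erase c, ∀ w' ∈ A2.erase c,
          3 ^ k ≤ 2 * (comp G (A2.erase c) w).card →
          3 ^ k ≤ 2 * (comp G (A2.erase c) w').card →
          comp G (A2.erase c) w = comp G (A2.erase c) w' := by
        intro w hw w' hw' hbw hbw'
        have hwS : w ∈ S ∧ w ∉ C1 := by rw [hA2er, Finset.mem_sdiff] at hw; exact hw
        have hw'S : w' ∈ S ∧ w' ∉ C1 := by rw [hA2er, Finset.mem_sdiff] at hw'; exact hw'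
        rw [hcompeq w hw] at hbw ⊢
        rw [hcompeq w' hw'] at hbw' ⊢
        rcases hbigtwo w hwS.1 hbw with h1 | h1
        · exact absurd (h1 ▸ mem_comp_self hwS.1) hwS.2
        rcases hbigtwo w' hw'S.1 hbw' with h2 | h2
        · exact absurd (h2 ▸ mem_comp_self hw'S.1) hw'S.2
        rw [h1, h2]
      obtain ⟨L2, hL2, hL2card, hL2ne, hL2r⟩ :=
        anchored_decomp hG ihk A2.card A2 le_rfl hconnA2 c hcA2 hA2Hall hA2onebig
      -- glue: reverse L1, bridge {r1, c}, then L2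
      have hrev := hL1.reverse
      have hrevlen : L1.reverse.length = L1.length := List.length_reverse
      have hrevne : L1.reverse ≠ [] := by
        intro h
        exact hL1ne (List.reverse_eq_nil_iff.mp h)
      have hL1len : 0 < L1.length := List.length_pos_iff.mpr hL1ne
      have hrevlast : r1 ∈ bag L1.reverse (L1.reverse.length - 1) := by
        rw [hrevlen, bag_reverse L1 (by omega)]
        have : L1.length - 1 - (L1.length - 1) = 0 := by omega
        rw [this]
        exact hL1r
      have hdisj : ∀ x ∈ C1, x ∉ A2 := by
        intro x hx hx2
        rw [hA2def, Finset.mem_sdiff] at hx2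
        exact hx2.2 hx
      have hedge : ∀ x ∈ C1, ∀ y ∈ A2, G.Adj x y → x = r1 ∧ y = c := by
        intro x hx y hy hadj
        rw [hA2def, Finset.mem_sdiff] at hy
        by_cases hyc : y = c
        · subst hyc
          refine ⟨?_, rfl⟩
          by_contra hxr1
          apply neighbors_not_reach hG A hadj.symm hadjr1 hxr1
          have : Reach G C1 x r1 := conn_comp u1 x hx r1 hr1C1
          exact this.mono hC1sub
        · exfalso
          have hyS : y ∈ S := Finset.mem_erase.mpr ⟨hyc, hy.1⟩
          exact not_adj_of_comp_ne (hC1def ▸ hx) (mem_comp_self hyS)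
            (fun h => hy.2 (h ▸ mem_comp_self hyS |> (fun _ => by
              rw [← hC1def] at h
              exact h ▸ mem_comp_self hyS))) hadj
      have hbridge := IsDecomp.glue_bridge hrev hL2 hrevne hL2ne hrevlast
        (by
          have hl2 : 0 < L2.length := List.length_pos_iff.mpr hL2ne
          exact hL2r) hdisj hedge
      have hset : C1 ∪ A2 = A := by
        rw [hA2def]
        exact Finset.union_sdiff_of_subset (hC1sub.trans (Finset.erase_subset _ _))
      refine ⟨L1.reverse ++ [{r1, c}] ++ L2, hset ▸ hbridge, ?_⟩
      · apply bag_card_append (bag_card_append ?_ ?_) (fun i => hL2card i)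
        · intro i
          by_cases h : i < L1.reverse.length
          · rw [bag_reverse L1 (by omega)]
            exact hL1card _
          · rw [bag_of_le _ (not_lt.mp h)]; simp
        · intro i
          cases i with
          | zero =>
            have h2 : ({r1, c} : Finset V).card ≤ 2 :=
              Finset.card_insert_le _ _ |>.trans (by simp)
            calc (bag [{r1, c}] 0).card = ({r1, c} : Finset V).card := rfl
              _ ≤ 2 := h2
              _ ≤ k + 2 := by omega
          | succ m => simp [bag, List.getD]
    · -- at most one big component
      push_neg at htwo
      rcases Finset.eq_empty_or_nonempty S with hSemp | hSne
      · -- A = {c}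
        have hAc : A = {c} := by
          ext x
          simp only [Finset.mem_singleton]
          constructor
          · intro hx
            by_contra hxc
            exact absurd (Finset.mem_erase.mpr ⟨hxc, hx⟩) (by rw [← hSdef, hSemp]; simp)
          · rintro rfl; exact hcA
        rw [hAc]
        exact ⟨[{c}], isDecomp_singleton c, by
          intro i
          cases i with
          | zero => simp [bag]
          | succ m => simp [bag, List.getD]⟩
      obtain ⟨L, hL, hLcard, hLne, hLr⟩ :=
        anchored_decomp hG ihk A.card A le_rfl hconn c hcA hall htwo
      exact ⟨L, hL, hLcard⟩

end ConnDecomp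

section Forest
variable [Fintype V] {G : SimpleGraph V}

/-- Decomposition for arbitrary (possibly disconnected) subforests. -/
lemma forest_decomp (hG : G.IsAcyclic) (k : ℕ) :
    ∀ n, ∀ A : Finset V, A.card ≤ n → 2 * A.card + 1 ≤ 3 ^ k →
      ∃ L, IsDecomp G A L ∧ ∀ i, (bag L i).card ≤ k + 1 := by
  classical
  intro n
  induction n with
  | zero =>
    intro A hcard _
    have : A = ∅ := Finset.card_eq_zero.mp (by omega)
    subst this
    exact ⟨[], isDecomp_nil, fun i => by simp [bag_nil]⟩
  | succ n ihn =>
    intro A hcard hbound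
    rcases Finset.eq_empty_or_nonempty A with rfl | ⟨x, hx⟩
    · exact ⟨[], isDecomp_nil, fun i => by simp [bag_nil]⟩
    set C := comp G A x with hCdef
    have hCsub : C ⊆ A := comp_subset
    have hxC : x ∈ C := mem_comp_self hx
    have hCcard := Finset.card_le_card hCsub
    obtain ⟨L1, hL1, hL1card⟩ := conn_decomp hG k C (conn_comp x) (by omega)
    set A2 := A \ C with hA2def
    have hA2card : A2.card ≤ n := by
      have : A2.card = A.card - C.card := by rw [hA2def]; exact Finset.card_sdiff_of_subset hCsub
      have hCpos : 0 < C.card := Finset.card_pos.mpr ⟨x, hxC⟩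
      omega
    obtain ⟨L2, hL2, hL2card⟩ := ihn A2 hA2card (by
      have : A2.card ≤ A.card := Finset.card_le_card (by rw [hA2def]; exact Finset.sdiff_subset)
      omega)
    have hdisj : ∀ y ∈ C, y ∉ A2 := by
      intro y hy hy2
      rw [hA2def, Finset.mem_sdiff] at hy2
      exact hy2.2 hy
    have hedge : ∀ y ∈ C, ∀ z ∈ A2, ¬ G.Adj y z := by
      intro y hy z hz hadj
      rw [hA2def, Finset.mem_sdiff] at hz
      apply hz.2
      rcases mem_comp.mp hy with ⟨hyA, hry⟩
      exact mem_comp.mpr ⟨hz.1, hry.tail ⟨hyA, hz.1, hadj⟩⟩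
    have hset : C ∪ A2 = A := by
      rw [hA2def]
      exact Finset.union_sdiff_of_subset hCsub
    exact ⟨L1 ++ L2, hset ▸ hL1.glue_disjoint hL2 hdisj hedge,
      bag_card_append hL1card hL2card⟩

end Forest

section Sweep
variable [Fintype V] {G : SimpleGraph V}

/-- Sweeping along a linear decomposition gives a winning strategy. -/
lemma sweep {L : List (Finset V)} (hL : IsDecomp G Finset.univ L) {m : ℕ}
    (hcard : ∀ i, (bag L i).card ≤ m) :
    WinningStrategy G m L.length (fun i => bag L (i - 1)) := by
  classical
  constructor
  · exact fun i => hcard _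
  · -- burn ⊆ vertices whose bags are all in the future
    have key : ∀ t, burn G (fun i => bag L (i - 1)) t ⊆
        Finset.univ.filter (fun v => ∃ s, t ≤ s ∧ v ∈ bag L s) := by
      intro t
      induction t with
      | zero =>
        intro v hv
        obtain ⟨i, hi⟩ := hL.cover v (Finset.mem_univ v)
        exact Finset.mem_filter.mpr ⟨Finset.mem_univ v, i, Nat.zero_le i, hi⟩
      | succ t iht =>
        intro v hv
        rw [burn] at hv
        rcases Finset.mem_union.mp hv with hv | hv
        · rcases Finset.mem_sdiff.mp hv with ⟨hvB, hvF⟩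
          have := iht hvB
          obtain ⟨s, hts, hs⟩ := (Finset.mem_filter.mp this).2
          have hst : s ≠ t := by
            rintro rfl
            exact hvF (by simpa using hs)
          exact Finset.mem_filter.mpr ⟨Finset.mem_univ v, s, by omega, hs⟩
        · rw [nbhd, Finset.mem_filter] at hv
          obtain ⟨-, hvnB, u, huB, hadj⟩ := hv
          rcases Finset.mem_sdiff.mp huB with ⟨huB', huF⟩
          have := iht huB'
          obtain ⟨s, hts, hs⟩ := (Finset.mem_filter.mp this).2
          have hst : s ≠ t := by
            rintro rfl
            exact huF (by simpa using hs)
          obtain ⟨i, hiu, hiv⟩ := hL.edge u v (Finset.mem_univ u) (Finset.mem_univ v) hadj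
          have hit : t + 1 ≤ i := by
            by_contra hc
            push_neg at hc
            have : u ∈ bag L t := hL.interval i t s (by omega) (by omega) u hiu hs
            exact huF (by simpa using this)
          exact Finset.mem_filter.mpr ⟨Finset.mem_univ v, i, hit, hiv⟩
    have hempty : Finset.univ.filter (fun v => ∃ s, L.length ≤ s ∧ v ∈ bag L s) = ∅ := by
      apply Finset.filter_false_of_mem
      rintro v - ⟨s, hs, hmem⟩
      exact absurd (lt_of_mem_bag hmem) (by omega)
    have := key L.length
    rw [hempty] at this
    exact Finset.subset_empty.mp this

end Sweep

end FFaux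

/-- Every forest `F` satisfies `ffn F ≤ log₃(2|V| + 1) + 2`. -/
theorem ffn_forest [Fintype V] (G : SimpleGraph V) (h : G.IsAcyclic) :
    (ffn G : ℝ) ≤ Real.logb 3 (2 * (Fintype.card V : ℝ) + 1) + 2 := by
  classical
  set n := Fintype.card V with hn
  set k := Nat.clog 3 (2 * n + 1) with hk
  have hpow : 2 * n + 1 ≤ 3 ^ k := Nat.le_pow_clog (by norm_num) _
  obtain ⟨L, hL, hcard⟩ := FFaux.forest_decomp h k n Finset.univ (by simp [hn])
    (by simpa [hn, Finset.card_univ] using hpow)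
  have hwin : WinningStrategy G (k + 1) L.length (fun i => FFaux.bag L (i - 1)) :=
    FFaux.sweep hL hcard
  have hffn : ffn G ≤ k + 1 := Nat.sInf_le ⟨L.length, _, hwin⟩
  have hcast : (ffn G : ℝ) ≤ ((k : ℝ) + 1) := by exact_mod_cast hffn
  have hnn : (0:ℝ) ≤ (n:ℝ) := Nat.cast_nonneg n
  have hlog0 : 0 ≤ Real.logb 3 (2 * (n : ℝ) + 1) :=
    Real.logb_nonneg (by norm_num) (by linarith)
  rcases Nat.eq_zero_or_pos k with hk0 | hkpos
  · rw [hk0] at hcast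
    calc (ffn G : ℝ) ≤ 0 + 1 := by simpa using hcast
      _ ≤ Real.logb 3 (2 * (n : ℝ) + 1) + 2 := by linarith
  · have h2 : 1 < 2 * n + 1 := by
      by_contra hc
      push_neg at hc
      have hn0 : n = 0 := by omega
      have hkz : k = 0 := by rw [hk, hn0]; simp
      omega
    have hlt : 3 ^ (k - 1) < 2 * n + 1 := by
      have := Nat.pow_pred_clog_lt_self (b := 3) (by norm_num) h2
      simpa [hk, Nat.pred_eq_sub_one] using this
    have hltR : ((3 : ℝ)) ^ (k - 1) < 2 * (n : ℝ) + 1 := by exact_mod_cast hlt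
    have hlb : ((k - 1 : ℕ) : ℝ) < Real.logb 3 (2 * (n : ℝ) + 1) := by
      have hstep := Real.logb_lt_logb (by norm_num : (1:ℝ) < 3) (by positivity) hltR
      have heq : Real.logb 3 ((3:ℝ) ^ (k - 1)) = ((k - 1 : ℕ) : ℝ) := by
        rw [Real.logb_pow, Real.logb_self_eq_one (by norm_num)]
        ring
      rwa [heq] at hstep
    have hcastk : ((k - 1 : ℕ) : ℝ) = (k : ℝ) - 1 := by
      have : (1:ℕ) ≤ k := hkpos
      push_cast [this]
      ring
    rw [hcastk] at hlb
    linarith
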